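/- The function F: ℝ² → ℝ defined by F(x,y) = (1/9)x⁴ + 9y⁴ + 4x²y² + (4/9)x³y, restricted to the unit circle x² + y² = 1, attains its maximum value 9 exactly at the two points (0,1) and (0,-1). -/
import Mathlib


/-- on the unit circle, F(x,y) = x⁴/9 + 9y⁴ + 4x²y² + (4/9)x³y attains its
maximum value 9 exactly at (0,1) and (0,-1). -/
theorem F_max_on_circle :
    ∀ x y : ℝ, x^2 + y^2 = 1 →
      ((1/9) * x^4 + 9 * y^4 + 4 * x^2 * y^2 + (4/9) * x^3 * y ≤ 9 ∧
       ((1/9) * x^4 + 9 * y^4 + 4 * x^2 * y^2 + (4/9) * x^3 * y = 9 ↔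
         (x = 0 ∧ y = 1) ∨ (x = 0 ∧ y = -1))) := by
  intro x y h
  have hx2 : x^2 ≤ 1 := by nlinarith [sq_nonneg y]
  have hxy : x*y ≤ 1/2 ∧ -(1/2) ≤ x*y := by
    constructor <;> nlinarith [sq_nonneg (x - y), sq_nonneg (x + y)]
  constructor
  · nlinarith [mul_nonneg (sq_nonneg x) (by linarith : (0:ℝ) ≤ 1 - x^2),
      hxy.1, hxy.2, sq_nonneg x]
  · constructor
    · intro heq
      have hx : x = 0 := by
        by_contra hx
        have hx2pos : 0 < x^2 := by positivity
        nlinarith [mul_nonneg (sq_nonneg x) (by linarith : (0:ℝ) ≤ 1 - x^2),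
          hxy.1, hxy.2, hx2pos]
      subst hx
      have : y^2 = 1 := by linarith
      have : (y - 1) * (y + 1) = 0 := by ring_nf; linarith
      rcases mul_eq_zero.mp this with h1 | h1
      · left; constructor; rfl; linarith
      · right; constructor; rfl; linarith
    · rintro (⟨hx, hy⟩ | ⟨hx, hy⟩) <;> subst hx <;> subst hy <;> norm_num
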